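/- Let ξ < 4 be a real number. Let G, R > 0, let ρ : [0,R] → ℝ be continuous and nonnegative, set M(r) = ∫₀^r 4π s² ρ(s) ds, and suppose p : [0,R] → ℝ is continuous, differentiable on (0,R), satisfies p'(r) = −G·M(r)·ρ(r)/r² on (0,R), and p(R) = 0. Then ∫₀^R G·M(r)·M'(r)/r^{ξ} dr = 4π·(4−ξ)·∫₀^R p(r)·r^{3−ξ} dr, where M'(r) = 4π r² ρ(r). -/

import Mathlib

open Set intervalIntegral

/-- Chandrasekhar integral identity: for `ξ < 4`,
`∫₀^R G·M·M'/r^ξ dr = 4π(4−ξ)·∫₀^R p·r^{3−ξ} dr` where `M' r = 4πr²ρ r`. -/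
theorem stmt4 (ξ : ℝ) (hξ : ξ < 4) (G R : ℝ) (hG : 0 < G) (hR : 0 < R)
    (ρ : ℝ → ℝ) (hρ_cont : ContinuousOn ρ (Icc 0 R))
    (hρ_nonneg : ∀ r ∈ Icc (0 : ℝ) R, 0 ≤ ρ r)
    (M : ℝ → ℝ)
    (hM : ∀ r, M r = ∫ s in (0 : ℝ)..r, 4 * Real.pi * s ^ 2 * ρ s)
    (p : ℝ → ℝ) (hp_cont : ContinuousOn p (Icc 0 R))
    (hp_deriv : ∀ r ∈ Ioo (0 : ℝ) R, HasDerivAt p (-(G * M r * ρ r) / r ^ 2) r)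
    (hpR : p R = 0) :
    (∫ r in (0 : ℝ)..R, G * M r * (4 * Real.pi * r ^ 2 * ρ r) / r ^ ξ)
      = 4 * Real.pi * (4 - ξ) * ∫ r in (0 : ℝ)..R, p r * r ^ (3 - ξ) := by
  have hcpos : (0:ℝ) < 4 * Real.pi := by positivity
  set c : ℝ := 4 * Real.pi with hc
  -- bound on ρ
  obtain ⟨Cρ, hCρ⟩ : ∃ C, ∀ r ∈ Icc (0:ℝ) R, ‖ρ r‖ ≤ C :=
    (isCompact_Icc).exists_bound_of_continuousOn hρ_cont
  have hCρ' : ∀ r ∈ Icc (0:ℝ) R, ρ r ≤ Cρ := fun r hr =>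
    (le_abs_self _).trans (hCρ r hr)
  have hCρ0 : 0 ≤ Cρ := le_trans (norm_nonneg _) (hCρ 0 ⟨le_refl _, hR.le⟩)
  -- continuity of M
  have hint_cont : ContinuousOn (fun s => c * s ^ 2 * ρ s) (Icc 0 R) :=
    (continuousOn_const.mul (continuousOn_pow 2)).mul hρ_cont
  have hM_cont : ContinuousOn M (Icc 0 R) := by
    have : ContinuousOn (fun x => ∫ s in (0:ℝ)..x, c * s ^ 2 * ρ s) (uIcc 0 R) := by
      apply intervalIntegral.continuousOn_primitive_interval
      rw [uIcc_of_le hR.le]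
      exact hint_cont.integrableOn_Icc
    rw [uIcc_of_le hR.le] at this
    exact this.congr fun r _ => (hM r)
  -- nonnegativity of M
  have hM_nonneg : ∀ r ∈ Icc (0:ℝ) R, 0 ≤ M r := by
    intro r hr
    rw [hM r]
    apply intervalIntegral.integral_nonneg hr.1
    intro s hs
    have hs' : s ∈ Icc (0:ℝ) R := ⟨hs.1, hs.2.trans hr.2⟩
    have := hρ_nonneg s hs'
    positivity
  -- bound on M
  have hM_le : ∀ r ∈ Icc (0:ℝ) R, M r ≤ (c * Cρ * R ^ 2 / 3) * r := by
    intro r hr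
    have h1 : M r ≤ ∫ s in (0:ℝ)..r, c * Cρ * s ^ 2 := by
      rw [hM r]
      apply intervalIntegral.integral_mono_on hr.1
      · exact (hint_cont.mono (Icc_subset_Icc le_rfl hr.2)).intervalIntegrable_of_Icc hr.1
      · exact (Continuous.intervalIntegrable (by continuity) _ _)
      · intro s hs
        have hs' : s ∈ Icc (0:ℝ) R := ⟨hs.1, hs.2.trans hr.2⟩
        have h2 := hCρ' s hs'
        have h3 : (0:ℝ) ≤ s ^ 2 := sq_nonneg s
        have h4 := mul_le_mul_of_nonneg_left h2 (mul_nonneg hcpos.le h3)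
        linarith [h4]
    have h2 : ∫ s in (0:ℝ)..r, c * Cρ * s ^ 2 = c * Cρ * (r ^ 3 / 3) := by
      rw [intervalIntegral.integral_const_mul, integral_pow]
      norm_num
    have h3 : r ^ 3 ≤ R ^ 2 * r := by
      nlinarith [mul_nonneg (mul_nonneg (sub_nonneg.2 hr.2) hr.1) (by linarith [hr.1, hr.2, hR.le] : (0:ℝ) ≤ R + r)]
    have h4 := mul_le_mul_of_nonneg_left h3 (by positivity : (0:ℝ) ≤ c * Cρ / 3)
    calc M r ≤ c * Cρ * (r ^ 3 / 3) := h1.trans_eq h2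
      _ ≤ (c * Cρ * R ^ 2 / 3) * r := by linarith [h4]
  -- integrability of the p-term
  have hA : IntervalIntegrable (fun r => p r * r ^ (3 - ξ)) MeasureTheory.volume 0 R := by
    have h1 : IntervalIntegrable (fun r : ℝ => r ^ (3 - ξ)) MeasureTheory.volume 0 R :=
      intervalIntegral.intervalIntegrable_rpow' (by linarith)
    apply h1.continuousOn_mul
    rwa [uIcc_of_le hR.le]
  -- integrability of the main integrand
  have hB : IntervalIntegrable (fun r => G * M r * (c * r ^ 2 * ρ r) / r ^ ξ)
      MeasureTheory.volume 0 R := by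
    rw [intervalIntegrable_iff_integrableOn_Ioc_of_le hR.le]
    have hrpow_int : MeasureTheory.IntegrableOn
        (fun r : ℝ => (G * c ^ 2 * Cρ ^ 2 * R ^ 2 / 3) * r ^ (3 - ξ)) (Ioc 0 R) := by
      have h1 : IntervalIntegrable (fun r : ℝ => r ^ (3 - ξ)) MeasureTheory.volume 0 R :=
        intervalIntegral.intervalIntegrable_rpow' (by linarith)
      rw [intervalIntegrable_iff_integrableOn_Ioc_of_le hR.le] at h1
      exact h1.const_mul _
    apply MeasureTheory.Integrable.mono' hrpow_int
    · apply ContinuousOn.aestronglyMeasurable _ measurableSet_Ioc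
      apply ContinuousOn.div
      · exact (continuousOn_const.mul (hM_cont.mono Ioc_subset_Icc_self)).mul
          ((continuousOn_const.mul (continuousOn_pow 2)).mul (hρ_cont.mono Ioc_subset_Icc_self))
      · intro x hx
        exact (Real.continuousAt_rpow_const x ξ (Or.inl hx.1.ne')).continuousWithinAt
      · intro x hx
        exact (Real.rpow_pos_of_pos hx.1 ξ).ne'
    · rw [MeasureTheory.ae_restrict_iff' measurableSet_Ioc]
      filter_upwards with r hr
      have hr0 : (0:ℝ) < r := hr.1
      have hrIcc : r ∈ Icc (0:ℝ) R := ⟨hr0.le, hr.2⟩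
      have hm := hM_le r hrIcc
      have hmn := hM_nonneg r hrIcc
      have hrho := hCρ' r hrIcc
      have hrhon := hρ_nonneg r hrIcc
      have hξpos : (0:ℝ) < r ^ ξ := Real.rpow_pos_of_pos hr0 ξ
      have hBnn : 0 ≤ G * M r * (c * r ^ 2 * ρ r) / r ^ ξ := by positivity
      rw [Real.norm_of_nonneg hBnn]
      have e2ξ : (r:ℝ) ^ 2 / r ^ ξ = r ^ ((2:ℝ) - ξ) := by
        rw [Real.rpow_sub hr0, show ((2:ℝ)) = ((2:ℕ):ℝ) by norm_num, Real.rpow_natCast]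
      have hpow : (0:ℝ) < r ^ ((2:ℝ) - ξ) := Real.rpow_pos_of_pos hr0 _
      have e3 : r * r ^ ((2:ℝ) - ξ) = r ^ ((3:ℝ) - ξ) := by
        have h : r ^ ((3:ℝ) - ξ) = r ^ ((1:ℝ) + (2 - ξ)) := by ring_nf
        rw [h, Real.rpow_add hr0, Real.rpow_one]
      calc G * M r * (c * r ^ 2 * ρ r) / r ^ ξ
          = (c * G * (M r * ρ r)) * ((r:ℝ) ^ 2 / r ^ ξ) := by ring
        _ = (c * G * (M r * ρ r)) * r ^ ((2:ℝ) - ξ) := by rw [e2ξ]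
        _ ≤ (c * G * ((c * Cρ * R ^ 2 / 3 * r) * Cρ)) * r ^ ((2:ℝ) - ξ) := by
            apply mul_le_mul_of_nonneg_right _ hpow.le
            apply mul_le_mul_of_nonneg_left _ (by positivity)
            exact mul_le_mul hm hrho hrhon (by positivity)
        _ = (G * c ^ 2 * Cρ ^ 2 * R ^ 2 / 3) * (r * r ^ ((2:ℝ) - ξ)) := by ring
        _ = (G * c ^ 2 * Cρ ^ 2 * R ^ 2 / 3) * r ^ (3 - ξ) := by rw [e3]
  -- the antiderivative
  set F : ℝ → ℝ := fun r => -(c * r ^ (4 - ξ) * p r) with hF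
  have hF_cont : ContinuousOn F (Icc 0 R) := by
    have h1 : Continuous fun r : ℝ => r ^ (4 - ξ) :=
      continuous_iff_continuousAt.2 fun x =>
        Real.continuousAt_rpow_const x _ (Or.inr (by linarith))
    exact ((continuousOn_const.mul h1.continuousOn).mul hp_cont).neg
  have hF_deriv : ∀ r ∈ Ioo (0:ℝ) R, HasDerivAt F
      (G * M r * (c * r ^ 2 * ρ r) / r ^ ξ - c * (4 - ξ) * (p r * r ^ (3 - ξ))) r := by
    intro r hr
    have hr0 : (0:ℝ) < r := hr.1
    have h1 : HasDerivAt (fun x : ℝ => x ^ (4 - ξ)) ((4 - ξ) * r ^ (4 - ξ - 1)) r :=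
      Real.hasDerivAt_rpow_const (Or.inl hr0.ne')
    have h2 := hp_deriv r hr
    have h3 := ((h1.const_mul c).mul h2).neg
    convert h3 using 1
    case e'_4 => rfl
    case e'_5 => rfl
    case e'_8 => rfl
    have e1 : r ^ (4 - ξ - 1) = r ^ (3 - ξ) := by congr 1; ring
    have hrξ : (0:ℝ) < r ^ ξ := Real.rpow_pos_of_pos hr0 ξ
    have hr2 : (r:ℝ) ^ 2 ≠ 0 := by positivity
    have e2ξ : (r:ℝ) ^ 2 / r ^ ξ = r ^ ((2:ℝ) - ξ) := by
      rw [Real.rpow_sub hr0, show ((2:ℝ)) = ((2:ℕ):ℝ) by norm_num, Real.rpow_natCast]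
    have e4 : r ^ (4 - ξ) / (r:ℝ) ^ 2 = r ^ ((2:ℝ) - ξ) := by
      rw [show ((r:ℝ) ^ 2) = r ^ ((2:ℕ):ℝ) from (Real.rpow_natCast r 2).symm,
        ← Real.rpow_sub hr0]
      congr 1; ring
    rw [e1]
    have main : G * M r * (c * r ^ 2 * ρ r) / r ^ ξ
        = -(c * r ^ (4 - ξ) * (-(G * M r * ρ r) / (r:ℝ) ^ 2)) := by
      have l : G * M r * (c * r ^ 2 * ρ r) / r ^ ξ
          = (c * G * M r * ρ r) * ((r:ℝ) ^ 2 / r ^ ξ) := by ring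
      have rr : -(c * r ^ (4 - ξ) * (-(G * M r * ρ r) / (r:ℝ) ^ 2))
          = (c * G * M r * ρ r) * (r ^ (4 - ξ) / (r:ℝ) ^ 2) := by ring
      rw [l, rr, e2ξ, e4]
    rw [main]
    ring
  have hab : (0:ℝ) ≤ R := hR.le
  have key : (∫ r in (0:ℝ)..R,
      (G * M r * (c * r ^ 2 * ρ r) / r ^ ξ - c * (4 - ξ) * (p r * r ^ (3 - ξ)))) = F R - F 0 :=
    intervalIntegral.integral_eq_sub_of_hasDerivAt_of_le hab hF_cont hF_deriv
      (hB.sub ((hA.const_mul _)))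
  have hFR : F R = 0 := by simp [hF, hpR]
  have hF0 : F 0 = 0 := by
    simp [hF, Real.zero_rpow (by intro h; apply absurd h; intro h2; linarith : (4:ℝ) - ξ ≠ 0)]
  rw [intervalIntegral.integral_sub hB (hA.const_mul _), hFR, hF0,
    intervalIntegral.integral_const_mul] at key
  linarith [key]
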